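/- arXiv:2401.07924 — 2 statements merged into one kernel-verified Lean document; each statement's English description precedes it below -/
import Mathlib

section
/- For every n ≥ 3, there exists a surjective group homomorphism q_n from the cactus group J_n onto the cactus group J_{n−1} determined on the generators σ_i := σ_{1,i} by q_n(σ_i) = σ_{i−1} if i > 2 and q_n(σ_2) = 1. -/
/-- Generators of the cactus group `J n`: pairs `(p, q)` with `1 ≤ p < q ≤ n`. -/
abbrev CactusGen (n : ℕ) := {pq : ℕ × ℕ // 1 ≤ pq.1 ∧ pq.1 < pq.2 ∧ pq.2 ≤ n}

/-- The defining relators of the standard presentation of the cactus group `J n`: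
`σ_{p,q}² = 1`; `σ_{p,q}σ_{r,s} = σ_{r,s}σ_{p,q}` when `[p,q] ∩ [r,s] = ∅`;
and `σ_{p,q}σ_{r,s} = σ_{p+q-s,p+q-r}σ_{p,q}` when `[r,s] ⊆ [p,q]`. -/
def cactusRels (n : ℕ) : Set (FreeGroup (CactusGen n)) :=
  { w | (∃ g : CactusGen n, w = FreeGroup.of g ^ 2) ∨
    (∃ g h : CactusGen n, (g.1.2 < h.1.1 ∨ h.1.2 < g.1.1) ∧
      w = FreeGroup.of g * FreeGroup.of h * (FreeGroup.of h * FreeGroup.of g)⁻¹) ∨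
    (∃ g h k : CactusGen n, g.1.1 ≤ h.1.1 ∧ h.1.2 ≤ g.1.2 ∧
      k.1.1 = g.1.1 + g.1.2 - h.1.2 ∧ k.1.2 = g.1.1 + g.1.2 - h.1.1 ∧
      w = FreeGroup.of g * FreeGroup.of h * (FreeGroup.of k * FreeGroup.of g)⁻¹) }

/-- The cactus group `J n`, as a presented group. -/
abbrev CactusGroup (n : ℕ) := PresentedGroup (cactusRels n)

/-- The generator `σ_{p,q}` of the cactus group `J n` (junk value `1` for invalid indices). -/
def cactusσ (n p q : ℕ) : CactusGroup n :=
  if h : 1 ≤ p ∧ p < q ∧ q ≤ n then PresentedGroup.of ⟨(p, q), h⟩ else 1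

lemma cactus_mk_one {n : ℕ} {r : FreeGroup (CactusGen n)} (hr : r ∈ cactusRels n) :
    (QuotientGroup.mk r : CactusGroup n) = 1 :=
  (QuotientGroup.eq_one_iff r).mpr (Subgroup.subset_normalClosure hr)

lemma cactus_rel_sq {n : ℕ} (g : CactusGen n) :
    (PresentedGroup.of g : CactusGroup n) * PresentedGroup.of g = 1 := by
  have h := cactus_mk_one (n := n) (Or.inl ⟨g, rfl⟩)
  have : ((QuotientGroup.mk (FreeGroup.of g ^ 2) : CactusGroup n)) =
      PresentedGroup.of g * PresentedGroup.of g := by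
    rw [sq]; rfl
  rw [this] at h
  exact h

lemma cactus_rel_comm {n : ℕ} (g h : CactusGen n)
    (hd : g.1.2 < h.1.1 ∨ h.1.2 < g.1.1) :
    (PresentedGroup.of g : CactusGroup n) * PresentedGroup.of h =
      PresentedGroup.of h * PresentedGroup.of g := by
  have h1 := cactus_mk_one (n := n) (Or.inr (Or.inl ⟨g, h, hd, rfl⟩))
  have h2 : ((QuotientGroup.mk (FreeGroup.of g * FreeGroup.of h *
      (FreeGroup.of h * FreeGroup.of g)⁻¹) : CactusGroup n)) =
      (PresentedGroup.of g * PresentedGroup.of h) *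
        (PresentedGroup.of h * PresentedGroup.of g)⁻¹ := rfl
  rw [h2] at h1
  exact mul_inv_eq_one.mp h1

lemma cactus_rel_nested {n : ℕ} (g h k : CactusGen n)
    (h1 : g.1.1 ≤ h.1.1) (h2 : h.1.2 ≤ g.1.2)
    (h3 : k.1.1 = g.1.1 + g.1.2 - h.1.2) (h4 : k.1.2 = g.1.1 + g.1.2 - h.1.1) :
    (PresentedGroup.of g : CactusGroup n) * PresentedGroup.of h =
      PresentedGroup.of k * PresentedGroup.of g := by
  have h5 := cactus_mk_one (n := n) (Or.inr (Or.inr ⟨g, h, k, h1, h2, h3, h4, rfl⟩))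
  have h6 : ((QuotientGroup.mk (FreeGroup.of g * FreeGroup.of h *
      (FreeGroup.of k * FreeGroup.of g)⁻¹) : CactusGroup n)) =
      (PresentedGroup.of g * PresentedGroup.of h) *
        (PresentedGroup.of k * PresentedGroup.of g)⁻¹ := rfl
  rw [h6] at h5
  exact mul_inv_eq_one.mp h5

lemma cactusσ_of {n p q : ℕ} (h : 1 ≤ p ∧ p < q ∧ q ≤ n) :
    cactusσ n p q = PresentedGroup.of ⟨(p, q), h⟩ := by
  rw [cactusσ, dif_pos h]

lemma cactusσ_invalid {n p q : ℕ} (h : ¬(1 ≤ p ∧ p < q ∧ q ≤ n)) :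
    cactusσ n p q = 1 := by
  rw [cactusσ, dif_neg h]

lemma cactusσ_sq (m p q : ℕ) : cactusσ m p q * cactusσ m p q = 1 := by
  by_cases h : 1 ≤ p ∧ p < q ∧ q ≤ m
  · rw [cactusσ_of h]; exact cactus_rel_sq _
  · rw [cactusσ_invalid h, one_mul]

lemma cactusσ_comm (m p q r s : ℕ) (hd : q < r ∨ s < p) :
    cactusσ m p q * cactusσ m r s = cactusσ m r s * cactusσ m p q := by
  by_cases h1 : 1 ≤ p ∧ p < q ∧ q ≤ m
  · by_cases h2 : 1 ≤ r ∧ r < s ∧ s ≤ m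
    · rw [cactusσ_of h1, cactusσ_of h2]
      exact cactus_rel_comm _ _ hd
    · rw [cactusσ_invalid h2, one_mul, mul_one]
  · rw [cactusσ_invalid h1, one_mul, mul_one]

lemma cactusσ_nested (m p q r s : ℕ) (hpq : 1 ≤ p ∧ p < q ∧ q ≤ m)
    (hpr : p ≤ r) (hsq : s ≤ q) :
    cactusσ m p q * cactusσ m r s =
      cactusσ m (p + q - s) (p + q - r) * cactusσ m p q := by
  by_cases hrs : r < s
  · have h2 : 1 ≤ r ∧ r < s ∧ s ≤ m := ⟨le_trans hpq.1 hpr, hrs, le_trans hsq hpq.2.2⟩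
    have h3 : 1 ≤ p + q - s ∧ p + q - s < p + q - r ∧ p + q - r ≤ m := by
      obtain ⟨a, b, c⟩ := hpq; omega
    rw [cactusσ_of hpq, cactusσ_of h2, cactusσ_of h3]
    exact cactus_rel_nested _ _ _ hpr hsq rfl rfl
  · have h2 : ¬(1 ≤ r ∧ r < s ∧ s ≤ m) := by omega
    have h3 : ¬(1 ≤ p + q - s ∧ p + q - s < p + q - r ∧ p + q - r ≤ m) := by omega
    rw [cactusσ_invalid h2, cactusσ_invalid h3, one_mul, mul_one]

/-- For every `n ≥ 3`, there is a surjective homomorphism `q_n : J_n → J_{n-1}` sending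
`σ_{1,i}` to `σ_{1,i-1}` for `i > 2` and `σ_{1,2}` to `1`. -/
theorem cactus_surjection_onto_smaller (n : ℕ) (hn : 3 ≤ n) :
    ∃ q : CactusGroup n →* CactusGroup (n - 1), Function.Surjective q ∧
      (∀ i : ℕ, 2 < i → i ≤ n → q (cactusσ n 1 i) = cactusσ (n - 1) 1 (i - 1)) ∧
      q (cactusσ n 1 2) = 1 := by
  -- the map on generators: σ_{p,q} ↦ σ_{p,q-1} (which is 1 when q = p+1)
  set F : CactusGen n → CactusGroup (n - 1) :=
    fun g => cactusσ (n - 1) g.1.1 (g.1.2 - 1) with hF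
  have hrels : ∀ r ∈ cactusRels n, FreeGroup.lift F r = 1 := by
    rintro r (⟨g, rfl⟩ | ⟨g, h, hd, rfl⟩ | ⟨g, h, k, h1, h2, h3, h4, rfl⟩)
    · rw [sq, map_mul, FreeGroup.lift_apply_of]
      exact cactusσ_sq _ _ _
    · simp only [map_mul, map_inv, FreeGroup.lift_apply_of, hF]
      rw [mul_inv_eq_one]
      obtain ⟨hg1, hg2, hg3⟩ := g.2
      obtain ⟨hh1, hh2, hh3⟩ := h.2
      exact cactusσ_comm _ _ _ _ _ (by omega)
    · simp only [map_mul, map_inv, FreeGroup.lift_apply_of, hF]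
      rw [mul_inv_eq_one]
      obtain ⟨hg1, hg2, hg3⟩ := g.2
      obtain ⟨hh1, hh2, hh3⟩ := h.2
      by_cases hgap : g.1.1 + 1 < g.1.2
      · -- the image of g is a genuine generator
        have hpq : 1 ≤ g.1.1 ∧ g.1.1 < g.1.2 - 1 ∧ g.1.2 - 1 ≤ n - 1 := by omega
        have := cactusσ_nested (n - 1) g.1.1 (g.1.2 - 1) h.1.1 (h.1.2 - 1)
          hpq h1 (by omega)
        rw [this, h3, h4]
        congr 2 <;> omega
      · -- g has q = p+1, so h = g as intervals, everything maps to 1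
        have hh : h.1.1 = g.1.1 ∧ h.1.2 = g.1.2 := by omega
        have e1 : cactusσ (n - 1) g.1.1 (g.1.2 - 1) = 1 :=
          cactusσ_invalid (by omega)
        have e2 : cactusσ (n - 1) h.1.1 (h.1.2 - 1) = 1 :=
          cactusσ_invalid (by omega)
        have e3 : cactusσ (n - 1) k.1.1 (k.1.2 - 1) = 1 :=
          cactusσ_invalid (by omega)
        rw [e1, e2, e3]
  refine ⟨PresentedGroup.toGroup hrels, ?_, ?_, ?_⟩
  · -- surjectivity
    rw [← MonoidHom.range_eq_top, ← top_le_iff, ← PresentedGroup.closure_range_of (cactusRels (n-1))]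
    rw [Subgroup.closure_le]
    rintro x ⟨g, rfl⟩
    obtain ⟨hg1, hg2, hg3⟩ := g.2
    have hval : 1 ≤ g.1.1 ∧ g.1.1 < g.1.2 + 1 ∧ g.1.2 + 1 ≤ n := ⟨hg1, by omega, by omega⟩
    refine ⟨PresentedGroup.of ⟨(g.1.1, g.1.2 + 1), hval⟩, ?_⟩
    rw [PresentedGroup.toGroup.of, hF]
    simp only
    rw [Nat.add_sub_cancel, cactusσ_of ⟨hg1, hg2, hg3⟩]
  · intro i hi2 hin
    have h : 1 ≤ 1 ∧ 1 < i ∧ i ≤ n := ⟨le_refl 1, by omega, hin⟩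
    rw [cactusσ_of h, PresentedGroup.toGroup.of, hF]
  · have h : 1 ≤ 1 ∧ 1 < 2 ∧ 2 ≤ n := ⟨le_refl 1, by omega, by omega⟩
    rw [cactusσ_of h, PresentedGroup.toGroup.of, hF]
    show cactusσ (n - 1) 1 (2 - 1) = 1
    exact cactusσ_invalid (by omega)
end

section
/- Let G be the group presented by generators a, b, c with relations a² = b² = c² = 1, ab = ba and ac = ca (so G ≅ (ℤ₂ ∗ ℤ₂) × ℤ₂). Then the map sending σ_2 ↦ a, σ_3 ↦ b, σ_4 ↦ c extends to a surjective group homomorphism θ : J_4 → G from the cactus group J_4 onto G, where σ_i := σ_{1,i}. -/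
open scoped commutatorElement

/-- The group `G ≅ (ℤ₂ ∗ ℤ₂) × ℤ₂`, presented by generators `a, b, c` with relations
`a² = b² = c² = 1`, `ab = ba` and `ac = ca`. -/
def infDihedralTimesZ2Rels : Set (FreeGroup (Fin 3)) :=
  {FreeGroup.of (0 : Fin 3) ^ 2, FreeGroup.of (1 : Fin 3) ^ 2, FreeGroup.of (2 : Fin 3) ^ 2,
    ⁅FreeGroup.of (0 : Fin 3), FreeGroup.of (1 : Fin 3)⁆,
    ⁅FreeGroup.of (0 : Fin 3), FreeGroup.of (2 : Fin 3)⁆}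

abbrev InfDihedralTimesZ2 := PresentedGroup infDihedralTimesZ2Rels

namespace CactusAux

def A : InfDihedralTimesZ2 := PresentedGroup.of 0
def B : InfDihedralTimesZ2 := PresentedGroup.of 1
def C : InfDihedralTimesZ2 := PresentedGroup.of 2

lemma rel_one {r : FreeGroup (Fin 3)} (h : r ∈ infDihedralTimesZ2Rels) :
    (QuotientGroup.mk r : InfDihedralTimesZ2) = 1 := by
  rw [QuotientGroup.eq_one_iff]
  exact Subgroup.subset_normalClosure h

lemma mk_of (x : Fin 3) :
    (QuotientGroup.mk (FreeGroup.of x) : InfDihedralTimesZ2) = PresentedGroup.of x := rfl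

lemma hA2 : A * A = 1 := by
  have := rel_one (r := FreeGroup.of (0 : Fin 3) ^ 2) (by left; rfl)
  rw [QuotientGroup.mk_pow, mk_of] at this; rw [← sq]; exact this

lemma hB2 : B * B = 1 := by
  have := rel_one (r := FreeGroup.of (1 : Fin 3) ^ 2) (by right; left; rfl)
  rw [QuotientGroup.mk_pow, mk_of] at this; rw [← sq]; exact this

lemma hC2 : C * C = 1 := by
  have := rel_one (r := FreeGroup.of (2 : Fin 3) ^ 2) (by right; right; left; rfl)
  rw [QuotientGroup.mk_pow, mk_of] at this; rw [← sq]; exact this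

lemma hAB : A * B = B * A := by
  have := rel_one (r := ⁅FreeGroup.of (0 : Fin 3), FreeGroup.of (1 : Fin 3)⁆)
    (by right; right; right; left; rfl)
  have h : ⁅A, B⁆ = 1 := by
    rw [show (QuotientGroup.mk ⁅FreeGroup.of (0 : Fin 3), FreeGroup.of (1 : Fin 3)⁆ :
      InfDihedralTimesZ2) = ⁅A, B⁆ from
      map_commutatorElement (QuotientGroup.mk' _) _ _] at this
    exact this
  exact commutatorElement_eq_one_iff_mul_comm.mp h

lemma hAC : A * C = C * A := by
  have := rel_one (r := ⁅FreeGroup.of (0 : Fin 3), FreeGroup.of (2 : Fin 3)⁆)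
    (by right; right; right; right; rfl)
  have h : ⁅A, C⁆ = 1 := by
    rw [show (QuotientGroup.mk ⁅FreeGroup.of (0 : Fin 3), FreeGroup.of (2 : Fin 3)⁆ :
      InfDihedralTimesZ2) = ⁅A, C⁆ from
      map_commutatorElement (QuotientGroup.mk' _) _ _] at this
    exact this
  exact commutatorElement_eq_one_iff_mul_comm.mp h


lemma hCBC2 : (C * B * C) * (C * B * C) = 1 := by
  calc (C * B * C) * (C * B * C) = C * B * (C * C) * B * C := by
        simp [mul_assoc]
    _ = 1 := by rw [hC2]; simp [mul_assoc, hB2, hC2]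
      
lemma eCB : C * B = C * B * C * C := by rw [mul_assoc, hC2, mul_one]

lemma eC_CBC : C * (C * B * C) = B * C := by
  rw [show C * (C * B * C) = (C * C) * B * C by simp [mul_assoc], hC2, one_mul]

lemma eCBC_A : (C * B * C) * A = A * (C * B * C) := by
  calc (C * B * C) * A = C * B * (C * A) := by simp [mul_assoc]
    _ = C * (B * A) * C := by rw [← hAC]; simp [mul_assoc]
    _ = C * (A * B) * C := by rw [hAB]
    _ = (C * A) * B * C := by simp [mul_assoc]
    _ = A * (C * B * C) := by rw [← hAC]; simp [mul_assoc]

def fgen (g : CactusGen 4) : InfDihedralTimesZ2 :=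
  if g.1 = (1, 3) then B else if g.1 = (1, 4) then C
  else if g.1 = (2, 4) then C * B * C else A

lemma fgen_sq (g : CactusGen 4) : fgen g * fgen g = 1 := by
  unfold fgen
  split_ifs <;> first
    | exact hA2 | exact hB2 | exact hC2 | exact hCBC2

lemma key (x y z : InfDihedralTimesZ2) (h : x * y = z * x) :
    x * y * (z * x)⁻¹ = 1 := by rw [h, mul_inv_cancel]

lemma rels_check : ∀ r ∈ cactusRels 4, FreeGroup.lift fgen r = 1 := by
  rintro w (⟨g, rfl⟩ | ⟨g, h, hd, rfl⟩ | ⟨⟨⟨p,q⟩,hg⟩, ⟨⟨r,s⟩,hh⟩, ⟨⟨u,v⟩,hk⟩, h1, h2, h3, h4, rfl⟩)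
  · rw [map_pow, FreeGroup.lift_apply_of, sq]; exact fgen_sq g
  · obtain ⟨⟨p,q⟩,hg⟩ := g
    obtain ⟨⟨r,s⟩,hh⟩ := h
    have hp1 : 1 ≤ p := hg.1
    have hpq : p < q := hg.2.1
    have hq4 : q ≤ 4 := hg.2.2
    have hr1 : 1 ≤ r := hh.1
    have hrs : r < s := hh.2.1
    have hs4 : s ≤ 4 := hh.2.2
    have hd' : q < r ∨ s < p := hd
    simp only [map_mul, map_inv, FreeGroup.lift_apply_of]
    rcases hd' with hlt | hlt
    · have hp : p = 1 := by omega
      have hq : q = 2 := by omega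
      have hr : r = 3 := by omega
      have hs : s = 4 := by omega
      subst hp; subst hq; subst hr; subst hs
      apply key; norm_num [fgen]
    · have hr : r = 1 := by omega
      have hs : s = 2 := by omega
      have hp : p = 3 := by omega
      have hq : q = 4 := by omega
      subst hp; subst hq; subst hr; subst hs
      apply key; norm_num [fgen]
  · have hp1 : 1 ≤ p := hg.1
    have hpq : p < q := hg.2.1
    have hq4 : q ≤ 4 := hg.2.2
    have hr1 : 1 ≤ r := hh.1
    have hrs : r < s := hh.2.1
    have hs4 : s ≤ 4 := hh.2.2
    have h1' : p ≤ r := h1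
    have h2' : s ≤ q := h2
    have h3' : u = p + q - s := h3
    have h4' : v = p + q - r := h4
    have hp4 : p ≤ 4 := by omega
    have hr4 : r ≤ 4 := by omega
    simp only [map_mul, map_inv, FreeGroup.lift_apply_of]
    apply key
    interval_cases p <;> interval_cases q <;> interval_cases r <;> interval_cases s <;>
      first
        | omega
        | (norm_num at h3' h4'; subst h3'; subst h4'; norm_num [fgen] <;>
           first
             | rfl | exact hAB.symm | exact hAC.symm
             | exact eCB | exact eC_CBC | exact eCBC_A)

end CactusAux

/-- The map `σ_2 ↦ a`, `σ_3 ↦ b`, `σ_4 ↦ c` extends to a surjective homomorphism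
`θ : J_4 → G`, where `G = (ℤ₂ ∗ ℤ₂) × ℤ₂` is presented by `a, b, c` with
`a² = b² = c² = 1`, `ab = ba`, `ac = ca`, and `σ_i := σ_{1,i}`. -/
theorem cactus4_onto_infDihedral_times_Z2 :
    ∃ θ : CactusGroup 4 →* InfDihedralTimesZ2, Function.Surjective θ ∧
      θ (cactusσ 4 1 2) = PresentedGroup.of (0 : Fin 3) ∧
      θ (cactusσ 4 1 3) = PresentedGroup.of (1 : Fin 3) ∧
      θ (cactusσ 4 1 4) = PresentedGroup.of (2 : Fin 3) := by
  refine ⟨PresentedGroup.toGroup CactusAux.rels_check, ?_, ?_, ?_, ?_⟩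
  · intro x
    have hx := PresentedGroup.generated_by infDihedralTimesZ2Rels
      (PresentedGroup.toGroup CactusAux.rels_check).range ?_ x
    · exact hx
    · intro j
      fin_cases j
      · exact ⟨PresentedGroup.of ⟨(1,2), by norm_num⟩, by
          rw [PresentedGroup.toGroup.of]; norm_num [CactusAux.fgen, CactusAux.A]⟩
      · exact ⟨PresentedGroup.of ⟨(1,3), by norm_num⟩, by
          rw [PresentedGroup.toGroup.of]; norm_num [CactusAux.fgen, CactusAux.B]⟩
      · exact ⟨PresentedGroup.of ⟨(1,4), by norm_num⟩, by
          rw [PresentedGroup.toGroup.of]; norm_num [CactusAux.fgen, CactusAux.C]; rfl⟩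
  · rw [show cactusσ 4 1 2 = PresentedGroup.of ⟨(1,2), by norm_num⟩ from by
      simp [cactusσ]]
    rw [PresentedGroup.toGroup.of]
    norm_num [CactusAux.fgen, CactusAux.A]
  · rw [show cactusσ 4 1 3 = PresentedGroup.of ⟨(1,3), by norm_num⟩ from by
      simp [cactusσ]]
    rw [PresentedGroup.toGroup.of]
    norm_num [CactusAux.fgen, CactusAux.B]
  · rw [show cactusσ 4 1 4 = PresentedGroup.of ⟨(1,4), by norm_num⟩ from by
      simp [cactusσ]]
    rw [PresentedGroup.toGroup.of]
    norm_num [CactusAux.fgen, CactusAux.C]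
end
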